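/- Let X be a closed, connected, locally convex subset of ℝⁿ, and let x₀, x₁ ∈ X. Then there exists a point x_{1/2} ∈ X such that d_X(x₀, x_{1/2}) = d_X(x_{1/2}, x₁) = (1/2)·d_X(x₀, x₁), where d_X denotes the intrinsic path-length distance in X. -/

import Mathlib

open Set Metric

/-- A path `c : ℝ → ℝⁿ`, considered on `[0,1]`, is *monotone straight* if either it is
constant, or its image is the segment `[c 0, c 1]` and it parametrizes this segment
weakly monotonically. -/
def MonotoneStraight {n : ℕ} (c : ℝ → EuclideanSpace ℝ (Fin n)) : Prop :=
  (∀ t ∈ Set.Icc (0:ℝ) 1, c t = c 0) ∨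
  ((c '' Set.Icc (0:ℝ) 1 = segment ℝ (c 0) (c 1)) ∧
   ∀ t₁ t₂ t₃ : ℝ, 0 ≤ t₁ → t₁ < t₂ → t₂ < t₃ → t₃ ≤ 1 →
     c t₂ ∈ segment ℝ (c t₁) (c t₃))

/-- The restriction of `Ψ` to `U` is a *convex map*: any two points of `U` are joined by a
continuous path in `U` whose composition with `Ψ` is monotone straight. -/
def IsConvexMapOn {n : ℕ} {X : Type*} [TopologicalSpace X]
    (Ψ : X → EuclideanSpace ℝ (Fin n)) (U : Set X) : Prop :=
  ∀ x₀ ∈ U, ∀ x₁ ∈ U, ∃ γ : ℝ → X,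
    ContinuousOn γ (Set.Icc 0 1) ∧ (∀ t ∈ Set.Icc (0:ℝ) 1, γ t ∈ U) ∧
    γ 0 = x₀ ∧ γ 1 = x₁ ∧ MonotoneStraight (Ψ ∘ γ)

/-- The restriction `Ψ|_U : U → Ψ(U)` is an open map onto its image: the image of every
relatively open subset of `U` is relatively open in `Ψ(U)`. -/
def IsOpenOnto {n : ℕ} {X : Type*} [TopologicalSpace X]
    (Ψ : X → EuclideanSpace ℝ (Fin n)) (U : Set X) : Prop :=
  ∀ O : Set X, IsOpen O → ∃ V : Set (EuclideanSpace ℝ (Fin n)),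
    IsOpen V ∧ Ψ '' (O ∩ U) = V ∩ Ψ '' U

/-- The `Ψ`-distance: the infimum of the lengths (total variations) of `Ψ ∘ γ` over all
continuous paths `γ` in `X` from `x₀` to `x₁`; takes values in `[0,∞]`. -/
noncomputable def psiDist {n : ℕ} {X : Type*} [TopologicalSpace X]
    (Ψ : X → EuclideanSpace ℝ (Fin n)) (x₀ x₁ : X) : ENNReal :=
  ⨅ γ ∈ {γ : ℝ → X | ContinuousOn γ (Set.Icc 0 1) ∧ γ 0 = x₀ ∧ γ 1 = x₁},
    eVariationOn (Ψ ∘ γ) (Set.Icc 0 1)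

/-- The intrinsic (path-length) distance in a subset `X` of ℝⁿ: the infimum of lengths
(total variations) of continuous paths in `X` joining the two points; values in `[0,∞]`. -/
noncomputable def intrinsicDist {n : ℕ} (X : Set (EuclideanSpace ℝ (Fin n)))
    (x₀ x₁ : EuclideanSpace ℝ (Fin n)) : ENNReal :=
  ⨅ γ ∈ {γ : ℝ → EuclideanSpace ℝ (Fin n) |
      ContinuousOn γ (Set.Icc 0 1) ∧ (∀ t ∈ Set.Icc (0:ℝ) 1, γ t ∈ X) ∧
      γ 0 = x₀ ∧ γ 1 = x₁},
    eVariationOn γ (Set.Icc 0 1)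

namespace MidAux
variable {n : ℕ} {X : Set (EuclideanSpace ℝ (Fin n))} {x y z : EuclideanSpace ℝ (Fin n)}
local notation "E" => EuclideanSpace ℝ (Fin n)

theorem intrinsicDist_le {γ : ℝ → E} (h1 : ContinuousOn γ (Set.Icc 0 1))
    (h2 : ∀ t ∈ Set.Icc (0:ℝ) 1, γ t ∈ X) (h3 : γ 0 = x) (h4 : γ 1 = y) :
    intrinsicDist X x y ≤ eVariationOn γ (Set.Icc 0 1) :=
  iInf₂_le γ ⟨h1, h2, h3, h4⟩

theorem le_intrinsicDist {c : ENNReal}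
    (h : ∀ γ : ℝ → E, ContinuousOn γ (Set.Icc 0 1) → (∀ t ∈ Set.Icc (0:ℝ) 1, γ t ∈ X) →
      γ 0 = x → γ 1 = y → c ≤ eVariationOn γ (Set.Icc 0 1)) :
    c ≤ intrinsicDist X x y :=
  le_iInf₂ fun γ hγ => h γ hγ.1 hγ.2.1 hγ.2.2.1 hγ.2.2.2

theorem intrinsicDist_self (hx : x ∈ X) : intrinsicDist X x x = 0 := by
  refine le_antisymm ?_ zero_le
  have := intrinsicDist_le (γ := fun _ => x) continuousOn_const (fun t _ => hx) rfl rfl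
  simpa using this.trans_eq (eVariationOn.constant_on (by simp [Set.Subsingleton]))

theorem edist_le_intrinsicDist : edist x y ≤ intrinsicDist X x y := by
  refine le_intrinsicDist fun γ h1 h2 h3 h4 => ?_
  rw [← h3, ← h4]
  exact eVariationOn.edist_le γ (by simp) (by simp)

theorem intrinsicDist_le_edist (hseg : segment ℝ x y ⊆ X) :
    intrinsicDist X x y ≤ edist x y := by
  set γ : ℝ → E := fun t => x + t • (y - x) with hγ
  have hsegmem : ∀ t ∈ Set.Icc (0:ℝ) 1, γ t ∈ segment ℝ x y := by
    intro t ht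
    rw [segment_eq_image']
    exact ⟨t, ht, rfl⟩
  have hlip : LipschitzWith ‖y - x‖₊ γ := by
    apply LipschitzWith.of_dist_le_mul
    intro a b
    simp only [hγ]
    rw [dist_eq_norm]
    have : x + a • (y - x) - (x + b • (y - x)) = (a - b) • (y - x) := by
      rw [add_sub_add_left_eq_sub, ← sub_smul]
    rw [this, norm_smul]
    rw [dist_eq_norm, mul_comm]
    simp [Real.norm_eq_abs]
  have h1 : ContinuousOn γ (Set.Icc 0 1) := hlip.continuous.continuousOn
  have hvar : eVariationOn γ (Set.Icc 0 1) ≤ edist x y := by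
    have h2 : eVariationOn (γ ∘ id) (Set.Icc 0 1) ≤ ‖y - x‖₊ * eVariationOn (id : ℝ → ℝ) (Set.Icc 0 1) :=
      LipschitzOnWith.comp_eVariationOn_le (LipschitzWith.lipschitzOnWith hlip (s := univ)) (mapsTo_univ _ _)
    have h3 : eVariationOn (id : ℝ → ℝ) (Set.Icc 0 1) ≤ 1 := by
      have := MonotoneOn.eVariationOn_le (f := (id : ℝ → ℝ)) (s := Set.Icc (0:ℝ) 1)
        (monotoneOn_id) (a := 0) (b := 1) (by simp) (by simp)
      simpa using this
    calc eVariationOn γ (Set.Icc 0 1) = eVariationOn (γ ∘ id) (Set.Icc 0 1) := rfl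
    _ ≤ ‖y - x‖₊ * eVariationOn (id : ℝ → ℝ) (Set.Icc 0 1) := h2
    _ ≤ ‖y - x‖₊ * 1 := by gcongr
    _ = edist x y := by rw [mul_one, edist_comm, edist_nndist, nndist_eq_nnnorm]
  exact (intrinsicDist_le h1 (fun t ht => hseg (hsegmem t ht)) (by simp [hγ]) (by simp [hγ])).trans hvar

theorem exists_concat {α β : ℝ → E} (hα : ContinuousOn α (Set.Icc 0 1))
    (hβ : ContinuousOn β (Set.Icc 0 1)) (hjoin : α 1 = β 0) :
    ∃ c : ℝ → E, ContinuousOn c (Set.Icc 0 1) ∧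
      (∀ t : ℝ, (t ∈ Set.Icc (0:ℝ) (1/2) → c t = α (2*t)) ∧
        (t ∈ Set.Icc (0:ℝ) 1 → ¬ t ≤ 1/2 → c t = β (2*t-1))) ∧
      c 0 = α 0 ∧ c 1 = β 1 ∧
      eVariationOn c (Set.Icc 0 1) = eVariationOn α (Set.Icc 0 1) + eVariationOn β (Set.Icc 0 1) := by
  classical
  set A : ℝ → E := IccExtend zero_le_one ((Set.Icc (0:ℝ) 1).restrict α) with hA
  set B : ℝ → E := IccExtend zero_le_one ((Set.Icc (0:ℝ) 1).restrict β) with hB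
  have hAc : Continuous A := (continuousOn_iff_continuous_restrict.mp hα).Icc_extend'
  have hBc : Continuous B := (continuousOn_iff_continuous_restrict.mp hβ).Icc_extend'
  have hAeq : ∀ t ∈ Set.Icc (0:ℝ) 1, A t = α t := fun t ht => by
    rw [hA, IccExtend_of_mem _ _ ht]; rfl
  have hBeq : ∀ t ∈ Set.Icc (0:ℝ) 1, B t = β t := fun t ht => by
    rw [hB, IccExtend_of_mem _ _ ht]; rfl
  set c : ℝ → E := fun t => if t ≤ 1/2 then A (2*t) else B (2*t-1) with hc
  have hmid : A 1 = B 0 := by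
    rw [hAeq 1 (by norm_num), hBeq 0 (by norm_num), hjoin]
  have hcc : Continuous c := by
    apply Continuous.if_le (hAc.comp (by continuity)) (hBc.comp (by continuity))
      continuous_id continuous_const
    intro t ht
    have h2 : t = 1/2 := ht
    subst h2
    norm_num [hmid]
  have hcl : ∀ t : ℝ, (t ∈ Set.Icc (0:ℝ) (1/2) → c t = α (2*t)) ∧
      (t ∈ Set.Icc (0:ℝ) 1 → ¬ t ≤ 1/2 → c t = β (2*t-1)) := by
    intro t
    constructor
    · intro ht
      rw [hc]; simp only [if_pos ht.2]
      exact hAeq _ ⟨by linarith [ht.1], by linarith [ht.2]⟩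
    · intro ht1 ht
      rw [hc]; simp only [if_neg ht]
      push_neg at ht
      exact hBeq _ ⟨by linarith, by linarith [ht1.2]⟩
  have h0 : c 0 = α 0 := by
    rw [(hcl 0).1 ⟨le_refl _, by norm_num⟩]; norm_num
  have h1 : c 1 = β 1 := by
    rw [(hcl 1).2 (by norm_num) (by norm_num)]; norm_num
  have hleft : eVariationOn c (Set.Icc 0 (1/2)) = eVariationOn α (Set.Icc 0 1) := by
    have hφ : MonotoneOn (fun t : ℝ => t/2) (Set.Icc 0 1) :=
      Monotone.monotoneOn (fun a b hab => by show _ ≤ _; exact by linarith) _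
    have himg : (fun t : ℝ => t/2) '' Set.Icc 0 1 = Set.Icc 0 (1/2) := by
      ext u; constructor
      · rintro ⟨v, hv, rfl⟩; exact ⟨by linarith [hv.1], by linarith [hv.2]⟩
      · rintro ⟨h1, h2⟩; exact ⟨2*u, ⟨by linarith, by linarith⟩, by ring⟩
    have := eVariationOn.comp_eq_of_monotoneOn c (fun t : ℝ => t/2) hφ
    rw [himg] at this
    rw [← this]
    apply eVariationOn.eq_of_eqOn
    intro t ht
    show c (t/2) = α t
    rw [(hcl (t/2)).1 ⟨by linarith [ht.1], by linarith [ht.2]⟩]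
    congr 1; ring
  have hright : eVariationOn c (Set.Icc (1/2) 1) = eVariationOn β (Set.Icc 0 1) := by
    have hφ : MonotoneOn (fun t : ℝ => (t+1)/2) (Set.Icc 0 1) :=
      Monotone.monotoneOn (fun a b hab => by show _ ≤ _; exact by linarith) _
    have himg : (fun t : ℝ => (t+1)/2) '' Set.Icc 0 1 = Set.Icc (1/2) 1 := by
      ext u; constructor
      · rintro ⟨v, hv, rfl⟩; exact ⟨by linarith [hv.1], by linarith [hv.2]⟩
      · rintro ⟨h1, h2⟩; exact ⟨2*u - 1, ⟨by linarith, by linarith⟩, by ring⟩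
    have := eVariationOn.comp_eq_of_monotoneOn c (fun t : ℝ => (t+1)/2) hφ
    rw [himg] at this
    rw [← this]
    apply eVariationOn.eq_of_eqOn
    intro t ht
    show c ((t+1)/2) = β t
    rcases le_or_gt t 0 with h | h
    · have ht0 : t = 0 := le_antisymm h ht.1
      subst ht0
      rw [(hcl _).1 ⟨by norm_num, by norm_num⟩]
      rw [show 2*((0+1)/2) = (1:ℝ) by ring, hjoin]
    · rw [(hcl _).2 ⟨by linarith [ht.1], by linarith [ht.2]⟩ (by push_neg; linarith)]
      congr 1; ring
  refine ⟨c, hcc.continuousOn, hcl, h0, h1, ?_⟩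
  have := eVariationOn.Icc_add_Icc c (s := univ) (a := (0:ℝ)) (b := 1/2) (c := 1)
    (by norm_num) (by norm_num) (mem_univ _)
  simp only [univ_inter] at this
  rw [← this, hleft, hright]

theorem exists_path_lt {c : ENNReal} (h : intrinsicDist X x y < c) :
    ∃ γ : ℝ → E, ContinuousOn γ (Set.Icc 0 1) ∧ (∀ t ∈ Set.Icc (0:ℝ) 1, γ t ∈ X) ∧
      γ 0 = x ∧ γ 1 = y ∧ eVariationOn γ (Set.Icc 0 1) < c := by
  rw [intrinsicDist, iInf_lt_iff] at h
  obtain ⟨γ, hγ⟩ := h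
  rw [iInf_lt_iff] at hγ
  obtain ⟨hγmem, hlt⟩ := hγ
  exact ⟨γ, hγmem.1, hγmem.2.1, hγmem.2.2.1, hγmem.2.2.2, hlt⟩

theorem intrinsicDist_triangle (hy : y ∈ X) :
    intrinsicDist X x z ≤ intrinsicDist X x y + intrinsicDist X y z := by
  rcases eq_top_or_lt_top (intrinsicDist X x y) with h | hxy
  · rw [h]; simp
  rcases eq_top_or_lt_top (intrinsicDist X y z) with h | hyz
  · rw [h]; simp
  refine ENNReal.le_of_forall_pos_le_add fun ε hε hlt => ?_
  have hε2 : (0:ENNReal) < (ε:ENNReal)/2 :=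
    ENNReal.div_pos (ENNReal.coe_ne_zero.mpr hε.ne') ENNReal.ofNat_ne_top
  obtain ⟨α, hα1, hα2, hα3, hα4, hα5⟩ :=
    exists_path_lt (ENNReal.lt_add_right hxy.ne (hε2.ne'))
  obtain ⟨β, hβ1, hβ2, hβ3, hβ4, hβ5⟩ :=
    exists_path_lt (ENNReal.lt_add_right hyz.ne (hε2.ne'))
  obtain ⟨c, hc1, hc2, hc3, hc4, hc5⟩ := exists_concat hα1 hβ1 (by rw [hα4, hβ3])
  have hmem : ∀ t ∈ Set.Icc (0:ℝ) 1, c t ∈ X := by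
    intro t ht
    by_cases h : t ≤ 1/2
    · rw [(hc2 t).1 ⟨ht.1, h⟩]
      exact hα2 _ ⟨by linarith [ht.1], by linarith⟩
    · rw [(hc2 t).2 ht h]
      push_neg at h
      exact hβ2 _ ⟨by linarith, by linarith [ht.2]⟩
  have := intrinsicDist_le hc1 hmem (by rw [hc3, hα3]) (by rw [hc4, hβ4])
  rw [hc5] at this
  calc intrinsicDist X x z ≤ _ := this
  _ ≤ (intrinsicDist X x y + ε/2) + (intrinsicDist X y z + ε/2) := by
      exact add_le_add hα5.le hβ5.le
  _ = intrinsicDist X x y + intrinsicDist X y z + ε := by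
      rw [add_add_add_comm, ENNReal.add_halves]

theorem intrinsicDist_comm_le : intrinsicDist X y x ≤ intrinsicDist X x y := by
  refine le_iInf₂ fun γ hγ => ?_
  obtain ⟨h1, h2, h3, h4⟩ := hγ
  have hσ : AntitoneOn (fun t : ℝ => 1 - t) (Set.Icc 0 1) :=
    Antitone.antitoneOn (fun a b hab => by show _ ≤ _; exact by linarith) _
  have hmemσ : ∀ t ∈ Set.Icc (0:ℝ) 1, 1 - t ∈ Set.Icc (0:ℝ) 1 :=
    fun t ht => ⟨by linarith [ht.2], by linarith [ht.1]⟩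
  have himg : (fun t : ℝ => 1 - t) '' Set.Icc 0 1 = Set.Icc 0 1 := by
    ext u; constructor
    · rintro ⟨v, hv, rfl⟩; exact hmemσ v hv
    · rintro ⟨ha, hb⟩; exact ⟨1 - u, ⟨by linarith, by linarith⟩, by ring⟩
  have hvar := eVariationOn.comp_eq_of_antitoneOn γ (fun t : ℝ => 1 - t) hσ
  rw [himg] at hvar
  rw [← hvar]
  refine intrinsicDist_le ?_ ?_ (by simpa using h4) (by simpa using h3)
  · apply h1.comp (by continuity : Continuous fun t : ℝ => 1 - t).continuousOn
    intro t ht; exact hmemσ t ht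
  · intro t ht; exact h2 _ (hmemσ t ht)

theorem intrinsicDist_comm : intrinsicDist X x y = intrinsicDist X y x :=
  le_antisymm intrinsicDist_comm_le intrinsicDist_comm_le

theorem intrinsicDist_le_eVariationOn_Icc {γ : ℝ → E} (h1 : ContinuousOn γ (Set.Icc 0 1))
    (h2 : ∀ t ∈ Set.Icc (0:ℝ) 1, γ t ∈ X) {a b : ℝ} (ha : 0 ≤ a) (hab : a ≤ b) (hb : b ≤ 1) :
    intrinsicDist X (γ a) (γ b) ≤ eVariationOn γ (Set.Icc a b) := by
  rcases eq_or_lt_of_le hab with rfl | hab'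
  · have h0 : intrinsicDist X (γ a) (γ a) = 0 := intrinsicDist_self (h2 a ⟨ha, hab.trans hb⟩)
    rw [h0]; exact zero_le
  have hba : (0:ℝ) < b - a := by linarith
  set φ : ℝ → ℝ := fun u => a + u * (b - a) with hφdef
  have hφm : MonotoneOn φ (Set.Icc 0 1) :=
    Monotone.monotoneOn (fun s t hst => by simp only [hφdef]; nlinarith) _
  have hφmap : ∀ u ∈ Set.Icc (0:ℝ) 1, φ u ∈ Set.Icc a b := by
    intro u hu; constructor
    · simp only [hφdef]; nlinarith [hu.1]
    · simp only [hφdef]; nlinarith [hu.2]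
  have himg : φ '' Set.Icc 0 1 = Set.Icc a b := by
    ext u; constructor
    · rintro ⟨v, hv, rfl⟩; exact hφmap v hv
    · rintro ⟨hu1, hu2⟩
      refine ⟨(u - a)/(b - a), ⟨div_nonneg (by linarith) hba.le, ?_⟩, ?_⟩
      · rw [div_le_one hba]; linarith
      · show a + (u - a)/(b - a) * (b - a) = u
        rw [div_mul_cancel₀ _ hba.ne']; ring
  have hvar := eVariationOn.comp_eq_of_monotoneOn γ φ hφm
  rw [himg] at hvar
  rw [← hvar]
  refine intrinsicDist_le ?_ ?_ ?_ ?_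
  · apply h1.comp (by continuity : Continuous φ).continuousOn
    intro u hu
    have := hφmap u hu
    exact ⟨by linarith [this.1], by linarith [this.2]⟩
  · intro u hu
    have := hφmap u hu
    exact h2 _ ⟨by linarith [this.1], by linarith [this.2]⟩
  · show γ (φ 0) = γ a; simp [hφdef]
  · show γ (φ 1) = γ b; simp [hφdef]

theorem local_le {δ : ℝ} (hconv : Convex ℝ (ball x δ ∩ X)) (hx : x ∈ X) (hy : y ∈ X)
    (hd : y ∈ ball x δ) (hδ : 0 < δ) : intrinsicDist X x y ≤ edist x y := by
  refine intrinsicDist_le_edist fun p hp => ?_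
  exact (hconv.segment_subset ⟨mem_ball_self hδ, hx⟩ ⟨hd, hy⟩ hp).2

theorem intrinsicDist_ne_top (hconn : IsConnected X)
    (hloc : ∀ x ∈ X, ∃ δ > (0:ℝ), Convex ℝ (Metric.ball x δ ∩ X))
    {x₀ x₁ : E} (hx₀ : x₀ ∈ X) (hx₁ : x₁ ∈ X) : intrinsicDist X x₀ x₁ ≠ ⊤ := by
  choose! δf hδpos hδconv using hloc
  set S : Set E := {y | y ∈ X ∧ intrinsicDist X x₀ y ≠ ⊤} with hS
  set U : Set E := ⋃ y ∈ S, ball y (δf y) with hU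
  set V : Set E := ⋃ y ∈ X \ S, ball y (δf y) with hV
  have hUo : IsOpen U := isOpen_biUnion fun _ _ => isOpen_ball
  have hVo : IsOpen V := isOpen_biUnion fun _ _ => isOpen_ball
  have hXUV : X ⊆ U ∪ V := by
    intro y hy
    by_cases h : y ∈ S
    · exact Or.inl (mem_biUnion h (mem_ball_self (hδpos y hy)))
    · exact Or.inr (mem_biUnion ⟨hy, h⟩ (mem_ball_self (hδpos y hy)))
  have hsegd : ∀ w ∈ X, ∀ v ∈ X, v ∈ ball w (δf w) → intrinsicDist X w v ≠ ⊤ := by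
    intro w hw v hv hvb
    refine ne_top_of_le_ne_top (by simp [edist_ne_top]) (local_le (hδconv w hw) hw hv hvb ?_)
    exact hδpos w hw
  have key1 : X ∩ U ⊆ S := by
    rintro z ⟨hzX, hzU⟩
    obtain ⟨w, hwS, hzb⟩ := mem_iUnion₂.mp hzU
    refine ⟨hzX, ?_⟩
    have h1 := intrinsicDist_triangle (X := X) (x := x₀) (y := w) (z := z) hwS.1
    exact ne_top_of_le_ne_top (ENNReal.add_ne_top.mpr ⟨hwS.2, hsegd w hwS.1 z hzX hzb⟩) h1
  have key2 : X ∩ V ⊆ X \ S := by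
    rintro z ⟨hzX, hzV⟩
    obtain ⟨w, hwXS, hzb⟩ := mem_iUnion₂.mp hzV
    refine ⟨hzX, fun hzS => hwXS.2 ⟨hwXS.1, ?_⟩⟩
    have h1 := intrinsicDist_triangle (X := X) (x := x₀) (y := z) (z := w) hzX
    refine ne_top_of_le_ne_top (ENNReal.add_ne_top.mpr ⟨hzS.2, ?_⟩) h1
    rw [intrinsicDist_comm]
    exact hsegd w hwXS.1 z hzX hzb
  have hx₀S : x₀ ∈ S := ⟨hx₀, by rw [intrinsicDist_self hx₀]; simp⟩
  by_contra htop
  have hx₁V : (X ∩ V).Nonempty := by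
    refine ⟨x₁, hx₁, ?_⟩
    refine mem_biUnion ⟨hx₁, fun h : x₁ ∈ S => h.2 htop⟩ (mem_ball_self (hδpos x₁ hx₁))
  have hx₀U : (X ∩ U).Nonempty :=
    ⟨x₀, hx₀, mem_biUnion hx₀S (mem_ball_self (hδpos x₀ hx₀))⟩
  obtain ⟨z, hzX, hzU, hzV⟩ := hconn.isPreconnected U V hUo hVo hXUV hx₀U hx₁V
  exact (key2 ⟨hzX, hzV⟩).2 (key1 ⟨hzX, hzU⟩)

theorem evar_small_right {γ : ℝ → E} {a b : ℝ}
    (hc : ContinuousOn γ (Set.Icc a b)) (hfin : eVariationOn γ (Set.Icc a b) ≠ ⊤)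
    {t : ℝ} (ht : t ∈ Set.Ico a b) {ε : ENNReal} (hε : 0 < ε) :
    ∃ s ∈ Set.Ioc t b, eVariationOn γ (Set.Icc t s) ≤ ε := by
  classical
  set V := eVariationOn γ (Set.Icc t b) with hV
  have hVfin : V ≠ ⊤ :=
    ne_top_of_le_ne_top hfin (eVariationOn.mono γ (Set.Icc_subset_Icc ht.1 le_rfl))
  rcases le_or_gt V ε with hVε | hVε
  · exact ⟨b, ⟨ht.2, le_rfl⟩, hVε⟩
  have hεfin : ε ≠ ⊤ := ne_top_of_lt (hVε.trans_le le_top)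
  set η := ε / 2 with hη
  have hη0 : 0 < η := ENNReal.div_pos hε.ne' ENNReal.ofNat_ne_top
  have hηfin : η ≠ ⊤ := by
    simpa [hη] using (ENNReal.div_lt_top hεfin (by norm_num)).ne
  have hηε : η + η = ε := ENNReal.add_halves ε
  have hηV : η < V := lt_of_le_of_lt (le_add_self.trans_eq hηε) hVε
  have hVlt : V - η < V := ENNReal.sub_lt_self hVfin (hη0.trans hηV).ne' hη0.ne'
  have h2 : V - η < ⨆ p : ℕ × { u : ℕ → ℝ // Monotone u ∧ ∀ i, u i ∈ Set.Icc t b },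
      ∑ i ∈ Finset.range p.1, edist (γ (p.2.1 (i + 1))) (γ (p.2.1 i)) := hVlt
  obtain ⟨⟨N, u, hu, hus⟩, hsum⟩ := lt_iSup_iff.mp h2
  simp only at hsum
  have hSpos : 0 < ∑ i ∈ Finset.range N, edist (γ (u (i + 1))) (γ (u i)) :=
    lt_of_lt_of_le (tsub_pos_of_lt hηV) hsum.le
  have hexists : ∃ i, t < u i := by
    by_contra h
    push_neg at h
    have : ∀ i, u i = t := fun i => le_antisymm (h i) (hus i).1
    have : ∑ i ∈ Finset.range N, edist (γ (u (i + 1))) (γ (u i)) = 0 :=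
      Finset.sum_eq_zero fun i _ => by rw [this (i+1), this i, edist_self]
    rw [this] at hSpos; exact lt_irrefl _ hSpos
  set j := Nat.find hexists with hjdef
  have hj : t < u j := Nat.find_spec hexists
  have hjle : ∀ i, i < j → u i = t := fun i hij =>
    le_antisymm (not_lt.mp (Nat.find_min hexists hij)) (hus i).1
  have hcw : ContinuousWithinAt γ (Set.Icc t b) t :=
    (hc.mono (Set.Icc_subset_Icc ht.1 le_rfl)).continuousWithinAt ⟨le_rfl, ht.2.le⟩
  rw [ContinuousWithinAt, Metric.tendsto_nhdsWithin_nhds] at hcw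
  obtain ⟨δ', hδ'pos, hδ'⟩ := hcw η.toReal (ENNReal.toReal_pos hη0.ne' hηfin)
  set m := min b (u j) with hm
  have htm : t < m := lt_min ht.2 hj
  set s := min (t + δ' / 2) m with hs
  have hts : t < s := lt_min (by linarith) htm
  have hsb : s ≤ b := le_trans (min_le_right _ _) (min_le_left _ _)
  have hsuj : s ≤ u j := le_trans (min_le_right _ _) (min_le_right _ _)
  have hγst : edist (γ s) (γ t) ≤ η := by
    have hd : dist s t < δ' := by
      rw [Real.dist_eq, abs_of_pos (by linarith)]
      have := min_le_left (t + δ' / 2) m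
      linarith [hs ▸ this]
    have := hδ' ⟨hts.le, hsb⟩ hd
    rw [edist_dist]
    calc ENNReal.ofReal (dist (γ s) (γ t)) ≤ ENNReal.ofReal η.toReal :=
          ENNReal.ofReal_le_ofReal this.le
    _ = η := ENNReal.ofReal_toReal hηfin
  set u' : ℕ → ℝ := fun i => max (u i) s with hu'def
  have hu' : Monotone u' := fun i k hik => max_le_max (hu hik) le_rfl
  have hu's : ∀ i, u' i ∈ Set.Icc s b := fun i => ⟨le_max_right _ _, max_le (hus i).2 hsb⟩
  have hsui : ∀ i, t < u i → s ≤ u i := fun i h =>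
    hsuj.trans (hu (Nat.find_min' hexists h))
  have hper : ∀ i, edist (γ (u (i + 1))) (γ (u i)) ≤
      edist (γ (u' (i + 1))) (γ (u' i)) + (if u i < s ∧ s ≤ u (i+1) then η else 0) := by
    intro i
    by_cases hsu : s ≤ u i
    · have h1 : u' i = u i := max_eq_left hsu
      have h2 : u' (i+1) = u (i+1) := max_eq_left (hsu.trans (hu i.le_succ))
      rw [h1, h2, if_neg (by push_neg; intro h; exact absurd hsu (not_le.mpr h)), add_zero]
    · push_neg at hsu
      have huit : u i = t := by
        by_contra h
        exact absurd (hsui i (lt_of_le_of_ne (hus i).1 (Ne.symm h))) (not_le.mpr hsu)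
      by_cases hsu1 : s ≤ u (i+1)
      · have h1 : u' i = s := max_eq_right hsu.le
        have h2 : u' (i+1) = u (i+1) := max_eq_left hsu1
        rw [h1, h2, if_pos ⟨hsu, hsu1⟩, huit]
        calc edist (γ (u (i+1))) (γ t) ≤ edist (γ (u (i+1))) (γ s) + edist (γ s) (γ t) :=
              edist_triangle _ _ _
        _ ≤ edist (γ (u (i+1))) (γ s) + η := add_le_add_right hγst _
      · push_neg at hsu1
        have huit1 : u (i+1) = t := by
          by_contra h
          exact absurd (hsui (i+1) (lt_of_le_of_ne (hus (i+1)).1 (Ne.symm h))) (not_le.mpr hsu1)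
        rw [huit, huit1, edist_self]
        exact zero_le
  have hcard : ((Finset.range N).filter fun i => u i < s ∧ s ≤ u (i+1)).card ≤ 1 := by
    rw [Finset.card_le_one]
    intro p hp q hq
    simp only [Finset.mem_filter] at hp hq
    by_contra hne
    rcases lt_or_gt_of_ne hne with h | h
    · exact absurd (hp.2.2.trans (hu h)) (not_le.mpr hq.2.1)
    · exact absurd (hq.2.2.trans (hu h)) (not_le.mpr hp.2.1)
  have hind : ∑ i ∈ Finset.range N, (if u i < s ∧ s ≤ u (i+1) then η else (0:ENNReal)) ≤ η := by
    rw [← Finset.sum_filter, Finset.sum_const, nsmul_eq_mul]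
    have h1 : (((Finset.range N).filter fun i => u i < s ∧ s ≤ u (i+1)).card : ENNReal) ≤ 1 := by
      exact_mod_cast hcard
    calc _ ≤ (1:ENNReal) * η := mul_le_mul_left h1 η
    _ = η := one_mul η
  have hSum' : ∑ i ∈ Finset.range N, edist (γ (u' (i + 1))) (γ (u' i)) ≤
      eVariationOn γ (Set.Icc s b) := eVariationOn.sum_le (f := γ) (n := N) hu' hu's
  have hmain : V < eVariationOn γ (Set.Icc s b) + ε := by
    have h3 : V < (∑ i ∈ Finset.range N, edist (γ (u (i + 1))) (γ (u i))) + η :=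
      (ENNReal.sub_lt_iff_lt_right hηfin hηV.le).mp hsum
    calc V < _ := h3
    _ ≤ (∑ i ∈ Finset.range N, edist (γ (u' (i + 1))) (γ (u' i))
          + ∑ i ∈ Finset.range N, (if u i < s ∧ s ≤ u (i+1) then η else (0:ENNReal))) + η := by
        refine add_le_add_left ?_ η
        rw [← Finset.sum_add_distrib]
        exact Finset.sum_le_sum fun i _ => hper i
    _ ≤ (eVariationOn γ (Set.Icc s b) + η) + η :=
        add_le_add_left (add_le_add hSum' hind) η
    _ = eVariationOn γ (Set.Icc s b) + ε := by rw [add_assoc, hηε]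
  have hsplit : eVariationOn γ (Set.Icc t s) + eVariationOn γ (Set.Icc s b) = V := by
    have := eVariationOn.Icc_add_Icc γ (s := univ) hts.le hsb (mem_univ s)
    simpa using this
  refine ⟨s, ⟨hts, hsb⟩, ?_⟩
  have hWfin : eVariationOn γ (Set.Icc s b) ≠ ⊤ :=
    ne_top_of_le_ne_top hVfin (le_add_self.trans_eq hsplit)
  have hfinal : eVariationOn γ (Set.Icc s b) + eVariationOn γ (Set.Icc t s) <
      eVariationOn γ (Set.Icc s b) + ε := by
    rw [add_comm (eVariationOn γ (Set.Icc s b)), hsplit]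
    exact hmain
  exact ((ENNReal.add_lt_add_iff_left hWfin).mp hfinal).le

theorem evar_reflect (γ : ℝ → E) (a b : ℝ) (x y : ℝ) :
    eVariationOn (γ ∘ fun u => a + b - u) (Set.Icc x y)
      = eVariationOn γ (Set.Icc (a + b - y) (a + b - x)) := by
  have hanti : AntitoneOn (fun u : ℝ => a + b - u) (Set.Icc x y) :=
    Antitone.antitoneOn (fun p q hpq => by show _ ≤ _; exact by linarith) _
  have himg : (fun u : ℝ => a + b - u) '' Set.Icc x y = Set.Icc (a + b - y) (a + b - x) := by
    ext w; constructor
    · rintro ⟨v, hv, rfl⟩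
      exact ⟨by simp only; linarith [hv.2], by simp only; linarith [hv.1]⟩
    · rintro ⟨h1, h2⟩
      exact ⟨a + b - w, ⟨by linarith, by linarith⟩, by simp only; ring⟩
  have := eVariationOn.comp_eq_of_antitoneOn γ (fun u : ℝ => a + b - u) hanti
  rw [himg] at this
  exact this

theorem evar_small_left {γ : ℝ → E} {a b : ℝ}
    (hc : ContinuousOn γ (Set.Icc a b)) (hfin : eVariationOn γ (Set.Icc a b) ≠ ⊤)
    {t : ℝ} (ht : t ∈ Set.Ioc a b) {ε : ENNReal} (hε : 0 < ε) :
    ∃ s ∈ Set.Ico a t, eVariationOn γ (Set.Icc s t) ≤ ε := by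
  set γ' : ℝ → E := γ ∘ fun u => a + b - u with hγ'
  have hmapsTo : ∀ u ∈ Set.Icc a b, a + b - u ∈ Set.Icc a b :=
    fun u hu => ⟨by linarith [hu.2], by linarith [hu.1]⟩
  have hc' : ContinuousOn γ' (Set.Icc a b) := by
    apply hc.comp (Continuous.continuousOn (by continuity))
    intro u hu; exact hmapsTo u hu
  have hfin' : eVariationOn γ' (Set.Icc a b) ≠ ⊤ := by
    rw [hγ', evar_reflect γ a b a b]
    simpa [show a + b - b = a by ring, show a + b - a = b by ring] using hfin
  have ht' : a + b - t ∈ Set.Ico a b := ⟨by linarith [ht.2], by linarith [ht.1]⟩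
  obtain ⟨s', hs', hvar⟩ := evar_small_right hc' hfin' ht' hε
  refine ⟨a + b - s', ⟨by linarith [hs'.2], by linarith [hs'.1]⟩, ?_⟩
  rw [hγ', evar_reflect γ a b (a + b - t) s'] at hvar
  simpa [show a + b - (a + b - t) = t by ring] using hvar

theorem exists_half_split {γ : ℝ → E} (hc : ContinuousOn γ (Set.Icc 0 1))
    (hfin : eVariationOn γ (Set.Icc 0 1) ≠ ⊤) :
    ∃ t ∈ Set.Icc (0:ℝ) 1,
      eVariationOn γ (Set.Icc 0 t) ≤ eVariationOn γ (Set.Icc 0 1) / 2 ∧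
      eVariationOn γ (Set.Icc t 1) ≤ eVariationOn γ (Set.Icc 0 1) / 2 := by
  set L := eVariationOn γ (Set.Icc 0 1) with hL
  set T : Set ℝ := {t : ℝ | t ∈ Set.Icc (0:ℝ) 1 ∧ L/2 ≤ eVariationOn γ (Set.Icc 0 t)} with hT
  have h1T : (1:ℝ) ∈ T := ⟨⟨zero_le_one, le_rfl⟩, ENNReal.half_le_self⟩
  have hTne : T.Nonempty := ⟨1, h1T⟩
  have hTbdd : BddBelow T := ⟨0, fun t ht => ht.1.1⟩
  set t₀ := sInf T with ht₀
  have ht₀0 : 0 ≤ t₀ := le_csInf hTne fun t ht => ht.1.1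
  have ht₀1 : t₀ ≤ 1 := csInf_le hTbdd h1T
  have hsplitvar : ∀ u v w : ℝ, u ≤ v → v ≤ w →
      eVariationOn γ (Set.Icc u v) + eVariationOn γ (Set.Icc v w)
      = eVariationOn γ (Set.Icc u w) := by
    intro u v w h1 h2
    have := eVariationOn.Icc_add_Icc γ (s := univ) h1 h2 (mem_univ v)
    simpa using this
  have hfin0 : ∀ u v : ℝ, 0 ≤ u → v ≤ 1 → eVariationOn γ (Set.Icc u v) ≠ ⊤ := by
    intro u v hu hv
    exact ne_top_of_le_ne_top hfin (eVariationOn.mono γ (Set.Icc_subset_Icc hu hv))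
  have hhalf_left : eVariationOn γ (Set.Icc 0 t₀) ≤ L / 2 := by
    rcases eq_or_lt_of_le ht₀0 with h0 | h0
    · rw [← h0]
      rw [Set.Icc_self]
      simp [eVariationOn.subsingleton]
    refine ENNReal.le_of_forall_pos_le_add fun ε hε hfin' => ?_
    obtain ⟨s, hs, hvar⟩ := evar_small_left hc hfin ⟨h0, ht₀1⟩
      (ε := (ε:ENNReal)) (by exact_mod_cast hε)
    have hsnotT : s ∉ T := fun hsT => absurd (csInf_le hTbdd hsT) (not_le.mpr hs.2)
    have hslt : eVariationOn γ (Set.Icc 0 s) < L/2 := by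
      rcases lt_or_ge (eVariationOn γ (Set.Icc 0 s)) (L/2) with h | h
      · exact h
      · exact absurd ⟨⟨hs.1, hs.2.le.trans ht₀1⟩, h⟩ hsnotT
    calc eVariationOn γ (Set.Icc 0 t₀)
        = eVariationOn γ (Set.Icc 0 s) + eVariationOn γ (Set.Icc s t₀) :=
          (hsplitvar 0 s t₀ hs.1 hs.2.le).symm
    _ ≤ L/2 + ε := add_le_add hslt.le hvar
  rcases eq_or_lt_of_le ht₀1 with h1 | h1
  · refine ⟨t₀, ⟨ht₀0, ht₀1⟩, hhalf_left, ?_⟩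
    rw [h1, Set.Icc_self]
    simp [eVariationOn.subsingleton]
  have hhalf_ge : L/2 ≤ eVariationOn γ (Set.Icc 0 t₀) := by
    refine ENNReal.le_of_forall_pos_le_add fun ε hε hfin' => ?_
    obtain ⟨s, hs, hvar⟩ := evar_small_right hc hfin ⟨ht₀0, h1⟩
      (ε := (ε:ENNReal)) (by exact_mod_cast hε)
    obtain ⟨w, hwT, hws⟩ := exists_lt_of_csInf_lt hTne hs.1
    calc L/2 ≤ eVariationOn γ (Set.Icc 0 w) := hwT.2
    _ ≤ eVariationOn γ (Set.Icc 0 s) := eVariationOn.mono γ (Set.Icc_subset_Icc le_rfl hws.le)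
    _ = eVariationOn γ (Set.Icc 0 t₀) + eVariationOn γ (Set.Icc t₀ s) :=
        (hsplitvar 0 t₀ s ht₀0 hs.1.le).symm
    _ ≤ eVariationOn γ (Set.Icc 0 t₀) + ε := add_le_add le_rfl hvar
  refine ⟨t₀, ⟨ht₀0, ht₀1⟩, hhalf_left, ?_⟩
  have hsum : eVariationOn γ (Set.Icc 0 t₀) + eVariationOn γ (Set.Icc t₀ 1) = L :=
    hsplitvar 0 t₀ 1 ht₀0 ht₀1
  have : eVariationOn γ (Set.Icc 0 t₀) + eVariationOn γ (Set.Icc t₀ 1)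
      ≤ eVariationOn γ (Set.Icc 0 t₀) + L/2 :=
    calc eVariationOn γ (Set.Icc 0 t₀) + eVariationOn γ (Set.Icc t₀ 1) = L := hsum
    _ = L/2 + L/2 := (ENNReal.add_halves L).symm
    _ ≤ eVariationOn γ (Set.Icc 0 t₀) + L/2 := add_le_add hhalf_ge le_rfl
  exact (ENNReal.add_le_add_iff_left (hfin0 0 t₀ le_rfl ht₀1)).mp this

end MidAux

/-- Existence of a midpoint with respect to the intrinsic distance. -/
theorem exists_midpoint_intrinsicDist {n : ℕ} (X : Set (EuclideanSpace ℝ (Fin n)))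
    (hclosed : IsClosed X) (hconn : IsConnected X)
    (hloc : ∀ x ∈ X, ∃ δ > (0:ℝ), Convex ℝ (Metric.ball x δ ∩ X))
    (x₀ x₁ : EuclideanSpace ℝ (Fin n)) (hx₀ : x₀ ∈ X) (hx₁ : x₁ ∈ X) :
    ∃ xh ∈ X,
      intrinsicDist X x₀ xh = intrinsicDist X x₀ x₁ / 2 ∧
      intrinsicDist X xh x₁ = intrinsicDist X x₀ x₁ / 2 := by
  classical
  set L := intrinsicDist X x₀ x₁ with hLdef
  have hLfin : L ≠ ⊤ := MidAux.intrinsicDist_ne_top hconn hloc hx₀ hx₁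
  have happrox : ∀ k : ℕ, ∃ m ∈ X,
      intrinsicDist X x₀ m ≤ (L + ((k+1 : ℕ) : ENNReal)⁻¹) / 2 ∧
      intrinsicDist X m x₁ ≤ (L + ((k+1 : ℕ) : ENNReal)⁻¹) / 2 := by
    intro k
    have hkpos : ((k+1 : ℕ) : ENNReal)⁻¹ ≠ 0 := by simp
    have hlt : L < L + ((k+1 : ℕ) : ENNReal)⁻¹ := ENNReal.lt_add_right hLfin hkpos
    obtain ⟨γ, h1, h2, h3, h4, h5⟩ := MidAux.exists_path_lt hlt
    have hfin : eVariationOn γ (Set.Icc 0 1) ≠ ⊤ := (h5.trans_le le_top).ne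
    obtain ⟨t, htmem, hle1, hle2⟩ := MidAux.exists_half_split h1 hfin
    refine ⟨γ t, h2 t htmem, ?_, ?_⟩
    · calc intrinsicDist X x₀ (γ t) = intrinsicDist X (γ 0) (γ t) := by rw [h3]
      _ ≤ eVariationOn γ (Set.Icc 0 t) :=
          MidAux.intrinsicDist_le_eVariationOn_Icc h1 h2 le_rfl htmem.1 htmem.2
      _ ≤ eVariationOn γ (Set.Icc 0 1) / 2 := hle1
      _ ≤ (L + ((k+1 : ℕ) : ENNReal)⁻¹) / 2 := ENNReal.div_le_div_right h5.le 2
    · calc intrinsicDist X (γ t) x₁ = intrinsicDist X (γ t) (γ 1) := by rw [h4]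
      _ ≤ eVariationOn γ (Set.Icc t 1) :=
          MidAux.intrinsicDist_le_eVariationOn_Icc h1 h2 htmem.1 htmem.2 le_rfl
      _ ≤ eVariationOn γ (Set.Icc 0 1) / 2 := hle2
      _ ≤ (L + ((k+1 : ℕ) : ENNReal)⁻¹) / 2 := ENNReal.div_le_div_right h5.le 2
  choose m hmX hm1 hm2 using happrox
  set R : ℝ := ((L+1)/2).toReal with hR
  have hLR : ((L+1)/2) ≠ ⊤ := by
    refine (ENNReal.div_lt_top ?_ (by norm_num)).ne
    exact ENNReal.add_ne_top.mpr ⟨hLfin, by norm_num⟩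
  have hbound : ∀ k, m k ∈ Metric.closedBall x₀ R ∩ X := by
    intro k
    refine ⟨?_, hmX k⟩
    have h1 : edist x₀ (m k) ≤ (L+1)/2 := by
      refine le_trans MidAux.edist_le_intrinsicDist ((hm1 k).trans ?_)
      refine ENNReal.div_le_div_right (add_le_add le_rfl ?_) 2
      refine ENNReal.inv_le_one.mpr ?_
      exact_mod_cast Nat.succ_le_succ (Nat.zero_le k)
    rw [Metric.mem_closedBall, dist_comm, dist_edist]
    exact ENNReal.toReal_mono hLR h1
  have hcomp : IsCompact (Metric.closedBall x₀ R ∩ X) :=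
    (isCompact_closedBall _ _).inter_right hclosed
  obtain ⟨z, hz, φ, hφ, hzlim⟩ := hcomp.tendsto_subseq hbound
  have hzX : z ∈ X := hz.2
  obtain ⟨δ, hδpos, hδconv⟩ := hloc z hzX
  have hL2fin : L/2 ≠ ⊤ := (ENNReal.div_lt_top hLfin (by norm_num)).ne
  have hkey : ∀ ε : NNReal, 0 < ε →
      intrinsicDist X x₀ z ≤ L/2 + ε ∧ intrinsicDist X z x₁ ≤ L/2 + ε := by
    intro ε hε
    obtain ⟨N, hN⟩ := ENNReal.exists_inv_nat_lt
      (a := (ε:ENNReal)) (by exact_mod_cast hε.ne')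
    set r : ℝ := min δ ((ε:ℝ)/2) with hr
    have hrpos : 0 < r := lt_min hδpos (by positivity)
    obtain ⟨K, hK⟩ := Metric.tendsto_atTop.mp hzlim r hrpos
    set k := max K N with hk
    have hdist : dist (m (φ k)) z < r := hK k (le_max_left _ _)
    have hφk : N ≤ φ k := le_trans (le_max_right K N) hφ.le_apply
    have hinv : ((φ k + 1 : ℕ) : ENNReal)⁻¹ ≤ ε := by
      refine le_trans ?_ hN.le
      refine ENNReal.inv_le_inv.mpr ?_
      exact_mod_cast Nat.le_succ_of_le hφk
    have hball : m (φ k) ∈ Metric.ball z δ := by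
      rw [Metric.mem_ball]
      exact lt_of_lt_of_le hdist (min_le_left _ _)
    have hDzm : intrinsicDist X z (m (φ k)) ≤ (ε:ENNReal)/2 := by
      refine le_trans (MidAux.local_le hδconv hzX (hmX _) hball hδpos) ?_
      calc edist z (m (φ k)) = ENNReal.ofReal (dist z (m (φ k))) := edist_dist _ _
      _ ≤ ENNReal.ofReal ((ε:ℝ)/2) := by
          refine ENNReal.ofReal_le_ofReal ?_
          rw [dist_comm]
          exact le_trans hdist.le (min_le_right _ _)
      _ = (ε:ENNReal)/2 := by
          rw [ENNReal.ofReal_div_of_pos (by norm_num), ENNReal.ofReal_coe_nnreal]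
          norm_num
    have hhalfeq : (L + ((φ k + 1 : ℕ) : ENNReal)⁻¹)/2 ≤ L/2 + (ε:ENNReal)/2 := by
      rw [ENNReal.add_div]
      exact add_le_add le_rfl (ENNReal.div_le_div_right hinv 2)
    constructor
    · calc intrinsicDist X x₀ z
          ≤ intrinsicDist X x₀ (m (φ k)) + intrinsicDist X (m (φ k)) z :=
            MidAux.intrinsicDist_triangle (hmX _)
      _ ≤ (L + ((φ k + 1 : ℕ) : ENNReal)⁻¹)/2 + (ε:ENNReal)/2 := by
          refine add_le_add (hm1 _) ?_
          rw [MidAux.intrinsicDist_comm]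
          exact hDzm
      _ ≤ (L/2 + (ε:ENNReal)/2) + (ε:ENNReal)/2 := add_le_add hhalfeq le_rfl
      _ = L/2 + ε := by rw [add_assoc, ENNReal.add_halves]
    · calc intrinsicDist X z x₁
          ≤ intrinsicDist X z (m (φ k)) + intrinsicDist X (m (φ k)) x₁ :=
            MidAux.intrinsicDist_triangle (hmX _)
      _ ≤ (ε:ENNReal)/2 + (L + ((φ k + 1 : ℕ) : ENNReal)⁻¹)/2 := add_le_add hDzm (hm2 _)
      _ ≤ (ε:ENNReal)/2 + (L/2 + (ε:ENNReal)/2) := add_le_add le_rfl hhalfeq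
      _ = L/2 + ε := by
          rw [add_comm ((ε:ENNReal)/2) (L/2 + (ε:ENNReal)/2), add_assoc, ENNReal.add_halves]
  have hD1 : intrinsicDist X x₀ z ≤ L/2 :=
    ENNReal.le_of_forall_pos_le_add fun ε hε _ => (hkey ε hε).1
  have hD2 : intrinsicDist X z x₁ ≤ L/2 :=
    ENNReal.le_of_forall_pos_le_add fun ε hε _ => (hkey ε hε).2
  have htri : L ≤ intrinsicDist X x₀ z + intrinsicDist X z x₁ :=
    MidAux.intrinsicDist_triangle hzX
  refine ⟨z, hzX, ?_, ?_⟩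
  · refine le_antisymm hD1 (not_lt.mp fun hlt => ?_)
    have : L < L :=
      calc L ≤ intrinsicDist X x₀ z + intrinsicDist X z x₁ := htri
      _ ≤ intrinsicDist X x₀ z + L/2 := add_le_add le_rfl hD2
      _ < L/2 + L/2 := ENNReal.add_lt_add_right hL2fin hlt
      _ = L := ENNReal.add_halves L
    exact lt_irrefl L this
  · refine le_antisymm hD2 (not_lt.mp fun hlt => ?_)
    have : L < L :=
      calc L ≤ intrinsicDist X x₀ z + intrinsicDist X z x₁ := htri
      _ ≤ L/2 + intrinsicDist X z x₁ := add_le_add hD1 le_rfl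
      _ < L/2 + L/2 := ENNReal.add_lt_add_left hL2fin hlt
      _ = L := ENNReal.add_halves L
    exact lt_irrefl L this
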